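/- Every real m × n matrix A of rank r admits a singular value decomposition into orthonormal rank-one components with the truncation-energy property: there exist nonnegative reals σ : Fin r → ℝ, an orthonormal family u : Fin r → Fin m → ℝ (orthonormal in the standard Euclidean inner product on Fin m → ℝ), and an orthonormal family v : Fin r → Fin n → ℝ, such that A a b = ∑_{k : Fin r} σ k * u k a * v k b for all a, b, and for every T ≤ r, the squared Frobenius norm of the residual after keeping the first T terms satisfies ∑_{a,b} (A a b − ∑_{k < T} σ k * u k a * v k b)^2 = ∑_{k ≥ T} (σ k)^2. -/

import Mathlib

open Matrix Finset

/-- Singular value decomposition of a real matrix into orthonormal rank-one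
components, with the truncation-energy property. -/
theorem matrix_svd_truncation_energy
    (m n : ℕ) (A : Matrix (Fin m) (Fin n) ℝ) :
    ∃ (σ : Fin A.rank → ℝ) (u : Fin A.rank → Fin m → ℝ)
      (v : Fin A.rank → Fin n → ℝ),
      (∀ k, 0 ≤ σ k) ∧
      (∀ k k' : Fin A.rank,
        (∑ a : Fin m, u k a * u k' a) = if k = k' then (1 : ℝ) else 0) ∧
      (∀ k k' : Fin A.rank,
        (∑ b : Fin n, v k b * v k' b) = if k = k' then (1 : ℝ) else 0) ∧
      (∀ (a : Fin m) (b : Fin n),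
        A a b = ∑ k : Fin A.rank, σ k * u k a * v k b) ∧
      (∀ T : ℕ, T ≤ A.rank →
        (∑ a : Fin m, ∑ b : Fin n,
            (A a b - ∑ k ∈ Finset.univ.filter (fun k : Fin A.rank => (k : ℕ) < T),
                σ k * u k a * v k b) ^ 2)
          = ∑ k ∈ Finset.univ.filter (fun k : Fin A.rank => T ≤ (k : ℕ)),
              (σ k) ^ 2) := by
  classical
  have hct : Aᴴ = Aᵀ := by simp [conjTranspose, Matrix.map]; rfl
  set S : Matrix (Fin n) (Fin n) ℝ := Aᴴ * A with hSdef
  have hpsd : S.PosSemidef := posSemidef_conjTranspose_mul_self A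
  have hS : S.IsHermitian := hpsd.isHermitian
  set lam : Fin n → ℝ := hS.eigenvalues with hlam
  have hnn : ∀ i, 0 ≤ lam i := fun i => hpsd.eigenvalues_nonneg i
  have hcard : Fintype.card {i // lam i ≠ 0} = A.rank := by
    rw [← rank_conjTranspose_mul_self A, hS.rank_eq_card_non_zero_eigs]
  let e : Fin A.rank ≃ {i // lam i ≠ 0} := (Fintype.equivFinOfCardEq hcard).symm
  set B := hS.eigenvectorBasis with hB
  have hdot : ∀ x y : Fin n → ℝ, (A *ᵥ x) ⬝ᵥ (A *ᵥ y) = x ⬝ᵥ (S *ᵥ y) := by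
    intro x y
    rw [hSdef, ← mulVec_mulVec, dotProduct_mulVec x, ← mulVec_transpose, hct,
      transpose_transpose, dotProduct_mulVec]
  have hBo : ∀ i j : Fin n, ∑ a, B i a * B j a = if i = j then (1:ℝ) else 0 := by
    intro i j
    have := (orthonormal_iff_ite.mp B.orthonormal) i j
    simpa [PiLp.inner_apply, RCLike.inner_apply, starRingEnd_apply, mul_comm] using this
  have hSmul : ∀ i, S *ᵥ ⇑(B i) = lam i • ⇑(B i) := fun i => hS.mulVec_eigenvectorBasis i
  have hdotB : ∀ i j : Fin n,
      (A *ᵥ ⇑(B i)) ⬝ᵥ (A *ᵥ ⇑(B j)) = lam j * (if i = j then 1 else 0) := by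
    intro i j
    rw [hdot, hSmul, dotProduct_smul, smul_eq_mul, ← hBo i j]
    rfl
  have hecoe : ∀ k k' : Fin A.rank, ((e k : Fin n) = (e k' : Fin n)) ↔ k = k' := by
    intro k k'
    rw [Subtype.coe_inj]
    exact ⟨fun h => e.injective h, fun h => by rw [h]⟩
  -- the data
  set σ : Fin A.rank → ℝ := fun k => Real.sqrt (lam (e k)) with hσ
  set v : Fin A.rank → Fin n → ℝ := fun k => ⇑(B (e k)) with hv
  set u : Fin A.rank → Fin m → ℝ := fun k => (σ k)⁻¹ • (A *ᵥ v k) with hu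
  have hpos : ∀ k, 0 < σ k := fun k =>
    Real.sqrt_pos.mpr (lt_of_le_of_ne (hnn _) (Ne.symm (e k).2))
  have hsq : ∀ k, σ k * σ k = lam (e k) := fun k => Real.mul_self_sqrt (hnn _)
  have hAv : ∀ k, A *ᵥ v k = σ k • u k := by
    intro k
    rw [hu]
    simp only
    rw [smul_inv_smul₀ (hpos k).ne']
  -- u orthonormal
  have huo : ∀ k k' : Fin A.rank,
      (∑ a : Fin m, u k a * u k' a) = if k = k' then (1 : ℝ) else 0 := by
    intro k k'
    have h1 : (∑ a : Fin m, u k a * u k' a)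
        = (σ k)⁻¹ * (σ k')⁻¹ * ((A *ᵥ v k) ⬝ᵥ (A *ᵥ v k')) := by
      simp only [hu, Pi.smul_apply, smul_eq_mul, dotProduct, Finset.mul_sum]
      exact Finset.sum_congr rfl fun a _ => by ring
    rw [h1, hv]
    simp only
    rw [hdotB]
    by_cases h : k = k'
    · subst h
      rw [if_pos rfl, if_pos rfl, mul_one, ← hsq k]
      field_simp
      exact div_self (hpos k).ne'
    · rw [if_neg (fun hc => h ((hecoe k k').mp hc)), if_neg h, mul_zero, mul_zero]
  -- v orthonormal
  have hvo : ∀ k k' : Fin A.rank,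
      (∑ b : Fin n, v k b * v k' b) = if k = k' then (1 : ℝ) else 0 := by
    intro k k'
    have h := hBo (e k) (e k')
    by_cases hkk : k = k'
    · subst hkk
      rw [if_pos rfl] at h
      rw [if_pos rfl]
      exact h
    · rw [if_neg (fun hc => hkk ((hecoe k k').mp hc))] at h
      rw [if_neg hkk]
      exact h
  -- decomposition
  have hdecomp : ∀ (a : Fin m) (b : Fin n),
      A a b = ∑ k : Fin A.rank, σ k * u k a * v k b := by
    intro a b
    have hcol : ∀ j : Fin n, ∑ i, B i j * B i b = if j = b then (1:ℝ) else 0 := by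
      intro j
      have h1 : (hS.eigenvectorUnitary : Matrix (Fin n) (Fin n) ℝ) *
          star (hS.eigenvectorUnitary : Matrix (Fin n) (Fin n) ℝ) = 1 :=
        mem_unitaryGroup_iff.mp hS.eigenvectorUnitary.2
      have h2 := congrFun (congrFun h1 j) b
      simpa [Matrix.mul_apply, Matrix.one_apply, Matrix.star_apply] using h2
    have hzero : ∀ i : Fin n, lam i = 0 → A *ᵥ ⇑(B i) = 0 := by
      intro i hi
      have h0 : (A *ᵥ ⇑(B i)) ⬝ᵥ (A *ᵥ ⇑(B i)) = 0 := by rw [hdotB, hi, zero_mul]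
      exact dotProduct_self_eq_zero.mp h0
    have key : A a b = ∑ i : Fin n, (A *ᵥ ⇑(B i)) a * B i b := by
      calc A a b = ∑ j, A a j * (if j = b then (1:ℝ) else 0) := by simp
        _ = ∑ j, A a j * ∑ i, B i j * B i b :=
            Finset.sum_congr rfl fun j _ => by rw [hcol j]
        _ = ∑ j, ∑ i, A a j * (B i j * B i b) := by
            exact Finset.sum_congr rfl fun j _ => Finset.mul_sum _ _ _
        _ = ∑ i, ∑ j, A a j * (B i j * B i b) := Finset.sum_comm
        _ = ∑ i : Fin n, (A *ᵥ ⇑(B i)) a * B i b := by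
            refine Finset.sum_congr rfl fun i _ => ?_
            simp only [mulVec, dotProduct, Finset.sum_mul]
            refine Finset.sum_congr rfl fun j _ => ?_
            exact (by ring : A a j * (B i j * B i b) = A a j * B i j * B i b)
    have hfilter : ∑ i : Fin n, (A *ᵥ ⇑(B i)) a * B i b
        = ∑ i ∈ Finset.univ.filter (fun i => lam i ≠ 0), (A *ᵥ ⇑(B i)) a * B i b := by
      refine (Finset.sum_filter_of_ne fun i _ hF => ?_).symm
      intro hl
      rw [hzero i hl] at hF
      simp at hF
    have hsub : ∑ i ∈ Finset.univ.filter (fun i => lam i ≠ 0), (A *ᵥ ⇑(B i)) a * B i b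
        = ∑ k : Fin A.rank, (A *ᵥ ⇑(B (e k))) a * B (e k) b := by
      rw [Finset.sum_subtype (p := fun i => lam i ≠ 0)
        (Finset.univ.filter (fun i => lam i ≠ 0))
        (by simp) (fun i => (A *ᵥ ⇑(B i)) a * B i b)]
      exact (Equiv.sum_comp e (fun i : {i // lam i ≠ 0} => (A *ᵥ ⇑(B i)) a * B i b)).symm
    rw [key, hfilter, hsub]
    refine Finset.sum_congr rfl fun k _ => ?_
    have h2 : A *ᵥ ⇑(B (e k)) = σ k • u k := hAv k
    rw [h2]
    simp only [Pi.smul_apply, smul_eq_mul]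
    rfl
  -- energy
  refine ⟨σ, u, v, fun k => Real.sqrt_nonneg _, huo, hvo, hdecomp, ?_⟩
  intro T hT
  have htail : ∀ (a : Fin m) (b : Fin n),
      A a b - ∑ k ∈ Finset.univ.filter (fun k : Fin A.rank => (k : ℕ) < T),
        σ k * u k a * v k b
      = ∑ k ∈ Finset.univ.filter (fun k : Fin A.rank => T ≤ (k : ℕ)),
        σ k * u k a * v k b := by
    intro a b
    have hsp := Finset.sum_filter_add_sum_filter_not Finset.univ
      (fun k : Fin A.rank => (k : ℕ) < T) (fun k => σ k * u k a * v k b)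
    have hfe : Finset.univ.filter (fun k : Fin A.rank => ¬ (k : ℕ) < T)
        = Finset.univ.filter (fun k : Fin A.rank => T ≤ (k : ℕ)) := by
      simp [not_lt]
    rw [hfe] at hsp
    rw [hdecomp a b, ← hsp]
    ring
  simp only [htail]
  set St := Finset.univ.filter (fun k : Fin A.rank => T ≤ (k : ℕ)) with hSt
  have swap : ∀ (s : Finset (Fin A.rank)) (f : Fin m → Fin n → Fin A.rank → ℝ),
      ∑ a : Fin m, ∑ b : Fin n, ∑ k ∈ s, f a b k
        = ∑ k ∈ s, ∑ a : Fin m, ∑ b : Fin n, f a b k := by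
    intro s f
    exact (Finset.sum_congr rfl fun a _ => Finset.sum_comm).trans Finset.sum_comm
  calc ∑ a : Fin m, ∑ b : Fin n, (∑ k ∈ St, σ k * u k a * v k b) ^ 2
      = ∑ a : Fin m, ∑ b : Fin n, ∑ k ∈ St, ∑ k' ∈ St,
          (σ k * u k a * v k b) * (σ k' * u k' a * v k' b) := by
        refine Finset.sum_congr rfl fun a _ => Finset.sum_congr rfl fun b _ => ?_
        rw [sq, Finset.sum_mul_sum]
    _ = ∑ k ∈ St, ∑ k' ∈ St, ∑ a : Fin m, ∑ b : Fin n,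
          (σ k * u k a * v k b) * (σ k' * u k' a * v k' b) := by
        rw [swap St (fun a b k => ∑ k' ∈ St, (σ k * u k a * v k b) * (σ k' * u k' a * v k' b))]
        exact Finset.sum_congr rfl fun k _ => swap St _
    _ = ∑ k ∈ St, ∑ k' ∈ St, σ k * σ k' *
          ((∑ a : Fin m, u k a * u k' a) * (∑ b : Fin n, v k b * v k' b)) := by
        refine Finset.sum_congr rfl fun k _ => Finset.sum_congr rfl fun k' _ => ?_
        rw [Finset.sum_mul_sum, Finset.mul_sum]
        refine Finset.sum_congr rfl fun a _ => ?_
        rw [Finset.mul_sum]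
        refine Finset.sum_congr rfl fun b _ => by ring
    _ = ∑ k ∈ St, (σ k) ^ 2 := by
        refine Finset.sum_congr rfl fun k hk => ?_
        rw [Finset.sum_eq_single k]
        · rw [huo, hvo, if_pos rfl, sq]; ring
        · intro k' _ hne
          rw [huo, hvo, if_neg (Ne.symm hne)]; ring
        · intro h; exact absurd hk h
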